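/- Fix ξ ∈ ℝⁿ and a unit vector v̂ ∈ ℝⁿ with |v̂·e₁| < 1. Then there exists r₀ > 0 such that for every r ≥ r₀ the function s ↦ V(ξ s + r v̂ s + e₁ s²/2) is Lebesgue integrable on ℝ, and ∫_ℝ V(ξ s + r v̂ s + e₁ s²/2) ds → 0 as r → ∞. -/
import Mathlib

open scoped InnerProductSpace
open MeasureTheory Real Filter

noncomputable section

set_option maxHeartbeats 800000 in
lemma key_scalar (B d : ℝ) (hB : 0 ≤ B) (hd0 : 0 ≤ d) (hd1 : d < 1) :
    ∃ κ > (0:ℝ), ∃ r0 > (0:ℝ), ∀ r, r0 ≤ r → ∀ W M s : ℝ, 0 ≤ W → r - B ≤ W →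
      |M| ≤ B + r * d →
      κ * (r^2 * s^2 + s^4) ≤ W^2 * s^2 + M * s^3 + s^4 / 4 := by
  have h1d : 0 < 1 - d^2 := by nlinarith
  refine ⟨(1 - d^2)/8, by positivity, (16*B + 4*B^2 + 4)/(1 - d^2) + B + 1, by positivity, ?_⟩
  intro r hr W M s hW0 hWl hM
  have hQ : 0 ≤ (16*B + 4*B^2 + 4)/(1 - d^2) := by positivity
  have hr1 : 1 ≤ r := by linarith
  have hrpos : 0 < r := by linarith
  have hrb : 16*B + 4*B^2 + 4 ≤ (1 - d^2) * r := by
    have h := (div_le_iff₀ h1d).mp (show (16*B + 4*B^2 + 4)/(1 - d^2) ≤ r by linarith)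
    linarith
  have hquad : 4*B*r + B^2 ≤ (1 - d^2)*r^2/4 := by
    nlinarith [mul_le_mul_of_nonneg_right hrb hrpos.le,
      mul_nonneg (sq_nonneg B) (by linarith : (0:ℝ) ≤ r - 1)]
  have hWr : 0 ≤ r - B := by linarith
  have hW2 : (r - B)^2 ≤ W^2 := by nlinarith
  have hM2 : M^2 ≤ (B + r*d)^2 := by
    have h := abs_le.mp hM
    exact sq_le_sq' h.1 h.2
  have t1 : (0:ℝ) ≤ (1-d^2)*(3-d^2)*r^2 := by
    apply mul_nonneg (mul_nonneg h1d.le (by nlinarith)) (sq_nonneg r)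
  have t2 : (0:ℝ) ≤ B*(1-d)*(3+d)*r := by
    apply mul_nonneg (mul_nonneg (mul_nonneg hB (by linarith)) (by linarith)) hrpos.le
  have t3 : (0:ℝ) ≤ B^2*(1+d^2) := by positivity
  have e1 : (1-d^2)/4*r^2 - 4*B*r - B^2
      ≤ (1+d^2)/2 * (r-B)^2 - (B+r*d)^2 - (1+d^2)/2*((1-d^2)/8)*r^2 := by
    nlinarith [t1, t2, t3]
  have hA : 0 ≤ (1+d^2)/2 * W^2 - M^2 - (1+d^2)/2 * ((1-d^2)/8) * r^2 := by
    nlinarith [hW2, hM2, hquad, e1]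
  have h1 : 0 ≤ ((1+d^2)/4 * s^2 + M*s)^2 := sq_nonneg _
  have hmain : 0 ≤ (1+d^2)/2 * (W^2*s^2 + M*s^3 + s^4/4 - (1-d^2)/8 * (r^2*s^2 + s^4)) := by
    nlinarith [h1, mul_nonneg (sq_nonneg s) hA]
  have ht : (0:ℝ) < (1+d^2)/2 := by positivity
  have hfin : 0 ≤ W^2*s^2 + M*s^3 + s^4/4 - (1-d^2)/8 * (r^2*s^2 + s^4) := by
    exact nonneg_of_mul_nonneg_right (by linarith) ht
  linarith

set_option maxHeartbeats 1600000 in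
theorem stmt_19 (n : ℕ) (hn : 2 ≤ n)
    (e1 : EuclideanSpace ℝ (Fin n))
    (he1 : e1 = EuclideanSpace.single ⟨0, by omega⟩ (1 : ℝ))
    (V : EuclideanSpace ℝ (Fin n) → ℝ) (hV : Continuous V)
    (C γ0 : ℝ) (hC : 0 < C) (hγ0 : 1 / 2 < γ0)
    (hVb : ∀ x, |V x| ≤ C * Real.sqrt (1 + ‖x‖ ^ 2) ^ (-γ0))
    (ξ : EuclideanSpace ℝ (Fin n))
    (vhat : EuclideanSpace ℝ (Fin n)) (hvhat : ‖vhat‖ = 1)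
    (hδ : |⟪vhat, e1⟫_ℝ| < 1) :
    ∃ r0 > (0 : ℝ),
      (∀ r : ℝ, r0 ≤ r → MeasureTheory.Integrable
        (fun s : ℝ => V (s • ξ + (r * s) • vhat + (s ^ 2 / 2) • e1))) ∧
      Filter.Tendsto
        (fun r : ℝ => ∫ s : ℝ, V (s • ξ + (r * s) • vhat + (s ^ 2 / 2) • e1))
        Filter.atTop (nhds 0) := by
  obtain ⟨κ, hκ, r0, hr0, hkey⟩ :=
    key_scalar ‖ξ‖ |⟪vhat, e1⟫_ℝ| (norm_nonneg ξ) (abs_nonneg _) hδ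
  have he1n : ‖e1‖ = 1 := by rw [he1, EuclideanSpace.norm_single]; norm_num
  obtain ⟨b, c, hb, hc, hbc⟩ : ∃ b c : ℝ, 1/4 < b ∧ 0 < c ∧ c + b = γ0/2 :=
    ⟨γ0/4 + 1/8, γ0/4 - 1/8, by linarith, by linarith, by ring⟩
  have hb0 : 0 < b := by linarith
  -- rewriting the curve
  have hx : ∀ r s : ℝ, s • ξ + (r * s) • vhat + (s ^ 2 / 2) • e1
      = s • (ξ + r • vhat) + (s ^ 2 / 2) • e1 := by
    intro r s
    rw [smul_add, smul_smul, mul_comm]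
  -- norm expansion
  have hnorm : ∀ r s : ℝ, ‖s • (ξ + r • vhat) + (s ^ 2 / 2) • e1‖ ^ 2
      = ‖ξ + r • vhat‖ ^ 2 * s ^ 2 + ⟪ξ + r • vhat, e1⟫_ℝ * s ^ 3 + s ^ 4 / 4 := by
    intro r s
    rw [norm_add_sq_real, norm_smul, norm_smul, real_inner_smul_left,
      real_inner_smul_right, he1n, mul_pow, mul_pow, Real.norm_eq_abs,
      Real.norm_eq_abs, sq_abs, sq_abs]
    ring
  -- lower bound on the norm along the curve
  have hxlow : ∀ r : ℝ, r0 ≤ r → ∀ s : ℝ,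
      κ * (r^2 * s^2 + s^4) ≤ ‖s • ξ + (r * s) • vhat + (s ^ 2 / 2) • e1‖ ^ 2 := by
    intro r hr s
    have hrnn : 0 ≤ r := le_trans hr0.le hr
    rw [hx, hnorm]
    apply hkey r hr _ _ s (norm_nonneg _)
    · have h1 : ‖r • vhat‖ = r := by
        rw [norm_smul, hvhat, Real.norm_eq_abs, abs_of_nonneg hrnn, mul_one]
      have h2 : ‖r • vhat‖ ≤ ‖ξ + r • vhat‖ + ‖ξ‖ := by
        calc ‖r • vhat‖ = ‖(ξ + r • vhat) - ξ‖ := by rw [add_sub_cancel_left]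
          _ ≤ ‖ξ + r • vhat‖ + ‖ξ‖ := norm_sub_le _ _
      linarith
    · rw [inner_add_left, real_inner_smul_left]
      refine (abs_add_le _ _).trans ?_
      have h3 : |⟪ξ, e1⟫_ℝ| ≤ ‖ξ‖ := by
        have := abs_real_inner_le_norm ξ e1
        rwa [he1n, mul_one] at this
      have h4 : |r * ⟪vhat, e1⟫_ℝ| = r * |⟪vhat, e1⟫_ℝ| := by
        rw [abs_mul, abs_of_nonneg hrnn]
      linarith
  -- pointwise bound on |V| along the curve
  have hVbound : ∀ r : ℝ, r0 ≤ r → ∀ s : ℝ,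
      |V (s • ξ + (r * s) • vhat + (s ^ 2 / 2) • e1)|
        ≤ C * ((1 + κ * (r^2 * s^2)) ^ (-c) * (1 + κ * s^4) ^ (-b)) := by
    intro r hr s
    set x := s • ξ + (r * s) • vhat + (s ^ 2 / 2) • e1 with hxdef
    have hlow := hxlow r hr s
    have h0 : (0:ℝ) ≤ κ * (r^2 * s^2) := by positivity
    have h0' : (0:ℝ) ≤ κ * s^4 := by positivity
    have hy0 : (0:ℝ) < 1 + ‖x‖^2 := by positivity
    have e : Real.sqrt (1 + ‖x‖ ^ 2) ^ (-γ0)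
        = (1 + ‖x‖^2) ^ (-c) * (1 + ‖x‖^2) ^ (-b) := by
      rw [Real.sqrt_eq_rpow, ← Real.rpow_mul (by positivity), ← Real.rpow_add hy0]
      congr 1
      linarith
    calc |V x| ≤ C * Real.sqrt (1 + ‖x‖ ^ 2) ^ (-γ0) := hVb x
      _ = C * ((1 + ‖x‖^2) ^ (-c) * (1 + ‖x‖^2) ^ (-b)) := by rw [e]
      _ ≤ C * ((1 + κ * (r^2 * s^2)) ^ (-c) * (1 + κ * s^4) ^ (-b)) := by
          apply mul_le_mul_of_nonneg_left _ hC.le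
          apply mul_le_mul
          · exact Real.rpow_le_rpow_of_nonpos (by positivity)
              (by nlinarith) (by linarith)
          · exact Real.rpow_le_rpow_of_nonpos (by positivity)
              (by nlinarith) (by linarith)
          · positivity
          · positivity
  -- the integrable majorant
  have hm : (0:ℝ) < min 1 κ / 3 := by positivity
  have hGint : Integrable (fun s : ℝ =>
      (C * (min 1 κ / 3) ^ (-b)) * ((1:ℝ) + ‖s‖^2) ^ (-(4*b)/2)) := by
    refine (integrable_rpow_neg_one_add_norm_sq ?_).const_mul _
    rw [Module.finrank_self]
    push_cast
    linarith
  have hmaj : ∀ s : ℝ, C * (1 + κ * s^4) ^ (-b)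
      ≤ (C * (min 1 κ / 3) ^ (-b)) * ((1:ℝ) + ‖s‖^2) ^ (-(4*b)/2) := by
    intro s
    have h2 : min 1 κ ≤ 1 := min_le_left _ _
    have h3 : min 1 κ ≤ κ := min_le_right _ _
    have h1 : min 1 κ / 3 * (1 + s^2)^2 ≤ 1 + κ * s^4 := by
      nlinarith [mul_nonneg hm.le (sq_nonneg (1 - s^2)),
        mul_nonneg (sub_nonneg.2 h3) (sq_nonneg (s^2)),
        mul_nonneg (sub_nonneg.2 h2) (sq_nonneg s)]
    have h4 : (0:ℝ) < 1 + s^2 := by positivity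
    have h5 : (1 + κ*s^4)^(-b) ≤ (min 1 κ / 3 * (1 + s^2)^2) ^ (-b) :=
      Real.rpow_le_rpow_of_nonpos (by positivity) h1 (by linarith)
    calc C * (1 + κ*s^4)^(-b) ≤ C * ((min 1 κ / 3 * (1 + s^2)^2) ^ (-b)) :=
          mul_le_mul_of_nonneg_left h5 hC.le
      _ = C * ((min 1 κ / 3)^(-b) * ((1 + s^2) ^ (2:ℕ)) ^ (-b)) := by
          rw [Real.mul_rpow hm.le (by positivity)]
      _ = (C * (min 1 κ / 3) ^ (-b)) * ((1:ℝ) + ‖s‖^2) ^ (-(4*b)/2) := by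
          rw [← Real.rpow_natCast (1+s^2) 2, ← Real.rpow_mul h4.le, Real.norm_eq_abs, sq_abs]
          push_cast
          rw [show (2:ℝ) * (-b) = -(4*b)/2 by ring]
          ring
  -- continuity facts
  have hcont : ∀ r : ℝ, Continuous (fun s : ℝ => s • ξ + (r * s) • vhat + (s ^ 2 / 2) • e1) := by
    intro r; fun_prop
  have hFmeas : ∀ r : ℝ, AEStronglyMeasurable
      (fun s : ℝ => C * ((1 + κ*(r^2*s^2))^(-c) * (1 + κ*s^4)^(-b))) volume := by
    intro r
    apply Continuous.aestronglyMeasurable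
    apply continuous_const.mul
    exact (Continuous.rpow_const (by fun_prop) (fun s => Or.inl (by positivity))).mul
      (Continuous.rpow_const (by fun_prop) (fun s => Or.inl (by positivity)))
  have hFleG : ∀ r s : ℝ, C * ((1 + κ*(r^2*s^2))^(-c) * (1 + κ*s^4)^(-b))
      ≤ C * (1 + κ*s^4)^(-b) := by
    intro r s
    have h1 : (1 + κ*(r^2*s^2))^(-c) ≤ 1 :=
      Real.rpow_le_one_of_one_le_of_nonpos (le_add_of_nonneg_right (by positivity))
        (by linarith)
    have h2 : (0:ℝ) ≤ (1 + κ*s^4)^(-b) := Real.rpow_nonneg (by positivity) _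
    calc C * ((1 + κ*(r^2*s^2))^(-c) * (1 + κ*s^4)^(-b))
        ≤ C * (1 * (1 + κ*s^4)^(-b)) :=
          mul_le_mul_of_nonneg_left (mul_le_mul_of_nonneg_right h1 h2) hC.le
      _ = C * (1 + κ*s^4)^(-b) := by ring
  have hFint : ∀ r : ℝ, Integrable
      (fun s : ℝ => C * ((1 + κ*(r^2*s^2))^(-c) * (1 + κ*s^4)^(-b))) := by
    intro r
    refine hGint.mono' (hFmeas r) (ae_of_all _ fun s => ?_)
    rw [Real.norm_eq_abs, abs_of_nonneg (by positivity)]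
    exact (hFleG r s).trans (hmaj s)
  have hVint : ∀ r : ℝ, r0 ≤ r → Integrable
      (fun s : ℝ => V (s • ξ + (r * s) • vhat + (s ^ 2 / 2) • e1)) := by
    intro r hr
    refine hGint.mono' ((hV.comp (hcont r)).aestronglyMeasurable) (ae_of_all _ fun s => ?_)
    rw [Real.norm_eq_abs]
    exact (hVbound r hr s).trans ((hFleG r s).trans (hmaj s))
  -- the dominated convergence of the majorizing integrals
  have hae : ∀ᵐ s : ℝ, s ≠ (0:ℝ) := by
    rw [ae_iff]
    simp only [not_not, Set.setOf_eq_eq_singleton]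
    exact measure_singleton 0
  have hlimF : Tendsto (fun r : ℝ => ∫ s : ℝ,
      C * ((1 + κ*(r^2*s^2))^(-c) * (1 + κ*s^4)^(-b))) atTop (nhds 0) := by
    have h := MeasureTheory.tendsto_integral_filter_of_dominated_convergence
      (μ := volume) (l := atTop) (f := fun _ : ℝ => (0:ℝ))
      (F := fun r s => C * ((1 + κ*(r^2*s^2))^(-c) * (1 + κ*s^4)^(-b)))
      (fun s : ℝ => (C * (min 1 κ / 3) ^ (-b)) * ((1:ℝ) + ‖s‖^2) ^ (-(4*b)/2))
      (Eventually.of_forall hFmeas)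
      (Eventually.of_forall fun r => ae_of_all _ fun s => by
        rw [Real.norm_eq_abs, abs_of_nonneg (by positivity)]
        exact (hFleG r s).trans (hmaj s))
      hGint
      (hae.mono fun s hs => by
        have h1 : Tendsto (fun r : ℝ => 1 + κ*(r^2*s^2)) atTop atTop := by
          apply tendsto_atTop_add_const_left
          have h3 := Tendsto.const_mul_atTop (show (0:ℝ) < κ*s^2 by positivity)
            (tendsto_pow_atTop (two_ne_zero) : Tendsto (fun r : ℝ => r^2) atTop atTop)
          exact h3.congr fun r => by ring
        have h4 := (tendsto_rpow_neg_atTop hc).comp h1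
        have h5 := (h4.mul_const ((1 + κ*s^4)^(-b))).const_mul C
        simpa using h5)
    simpa using h
  refine ⟨r0, hr0, hVint, ?_⟩
  rw [tendsto_zero_iff_abs_tendsto_zero]
  apply squeeze_zero' (Eventually.of_forall fun r => abs_nonneg _) ?_ hlimF
  filter_upwards [eventually_ge_atTop r0] with r hr
  calc |∫ s : ℝ, V (s • ξ + (r * s) • vhat + (s ^ 2 / 2) • e1)|
      ≤ ∫ s : ℝ, |V (s • ξ + (r * s) • vhat + (s ^ 2 / 2) • e1)| := by
        simpa [Real.norm_eq_abs] using norm_integral_le_integral_norm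
          (fun s : ℝ => V (s • ξ + (r * s) • vhat + (s ^ 2 / 2) • e1)) (μ := volume)
    _ ≤ ∫ s : ℝ, C * ((1 + κ*(r^2*s^2))^(-c) * (1 + κ*s^4)^(-b)) :=
        integral_mono ((hVint r hr).abs) (hFint r) (fun s => hVbound r hr s)
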